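/- For every positive integer k, the hypercube satisfies γ(Q_{2^k - 1}) = 2^{2^k - k - 1} and γ_t(Q_{2^k}) = 2^{2^k - k}, and moreover γ(Q_{2^k}) ≤ 2^{2^k - k} and γ_t(Q_{2^k + 1}) ≤ 2^{2^k - k + 1}. -/

import Mathlib

open SimpleGraph Finset

/-- A domatic `k`-coloring: every vertex sees all `k` colors in its closed neighborhood. -/
def IsDomaticColoring {V : Type*} (G : SimpleGraph V) (k : ℕ) (f : V → Fin k) : Prop :=
  ∀ v : V, ∀ c : Fin k, ∃ u : V, (u = v ∨ G.Adj v u) ∧ f u = c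

/-- A total domatic `k`-coloring: every vertex sees all `k` colors in its open neighborhood. -/
def IsTotalDomaticColoring {V : Type*} (G : SimpleGraph V) (k : ℕ) (f : V → Fin k) : Prop :=
  ∀ v : V, ∀ c : Fin k, ∃ u : V, G.Adj v u ∧ f u = c

/-- The domatic number `d(G)`. -/
noncomputable def domaticNumber {V : Type*} (G : SimpleGraph V) : ℕ :=
  sSup {k | ∃ f : V → Fin k, IsDomaticColoring G k f}

/-- The total domatic number `d_t(G)`. -/
noncomputable def totalDomaticNumber {V : Type*} (G : SimpleGraph V) : ℕ :=
  sSup {k | ∃ f : V → Fin k, IsTotalDomaticColoring G k f}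

def IsDominatingSet {V : Type*} (G : SimpleGraph V) (D : Set V) : Prop :=
  ∀ v : V, v ∈ D ∨ ∃ u ∈ D, G.Adj v u

def IsTotalDominatingSet {V : Type*} (G : SimpleGraph V) (D : Set V) : Prop :=
  ∀ v : V, ∃ u ∈ D, G.Adj v u

noncomputable def dominationNumber {V : Type*} (G : SimpleGraph V) [Fintype V] : ℕ :=
  sInf {n | ∃ D : Finset V, D.card = n ∧ IsDominatingSet G ↑D}

noncomputable def totalDominationNumber {V : Type*} (G : SimpleGraph V) [Fintype V] : ℕ :=
  sInf {n | ∃ D : Finset V, D.card = n ∧ IsTotalDominatingSet G ↑D}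

/-- An injective `k`-coloring: vertices with a common neighbor get distinct colors. -/
def IsInjectiveColoring {V : Type*} (G : SimpleGraph V) (k : ℕ) (f : V → Fin k) : Prop :=
  ∀ u w v : V, G.Adj v u → G.Adj v w → u ≠ w → f u ≠ f w

noncomputable def injChromaticNumber {V : Type*} (G : SimpleGraph V) : ℕ :=
  sInf {k | ∃ f : V → Fin k, IsInjectiveColoring G k f}

def NoIsolated {V : Type*} (G : SimpleGraph V) : Prop := ∀ v : V, ∃ u, G.Adj v u

/-- The Hamming graph `H(n,q)`: vertices differ in exactly one coordinate. -/
def hammingGraph (n q : ℕ) : SimpleGraph (Fin n → Fin q) :=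
  SimpleGraph.fromRel (fun x y => ∃ i, x i ≠ y i ∧ ∀ j, j ≠ i → x j = y j)

/-- The hypercube `Q n`. -/
def hypercube (n : ℕ) : SimpleGraph (Fin n → Fin 2) := hammingGraph n 2

/-- The torus `C_{k 0} □ ⋯ □ C_{k (d-1)}`. -/
def torusGraph (d : ℕ) (k : Fin d → ℕ) : SimpleGraph (∀ i : Fin d, ZMod (k i)) :=
  SimpleGraph.fromRel (fun x y => ∃ i, x i = y i + 1 ∧ ∀ j, j ≠ i → x j = y j)


namespace DomHyp

/-! ### ZMod 2 facts -/

lemma z2_succ_ne (a : ZMod 2) : a + 1 ≠ a := by revert a; decide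
lemma z2_eq_succ_of_ne {a b : ZMod 2} (h : a ≠ b) : b = a + 1 := by revert a b; decide
lemma z2_add_self (a : ZMod 2) : a + a = 0 := by revert a; decide

/-! ### Hypercube adjacency -/

lemma adj_flip {m : ℕ} (x : Fin m → ZMod 2) (j : Fin m) :
    (hypercube m).Adj x ((Function.update x j (x j + 1) : Fin m → ZMod 2)) := by
  show (fromRel (V := Fin m → ZMod 2) (fun x y => ∃ i, x i ≠ y i ∧ ∀ j, j ≠ i → x j = y j)).Adj x _
  rw [fromRel_adj]
  constructor
  · intro h
    have := congrFun h j
    rw [Function.update_self] at this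
    exact z2_succ_ne (x j) this.symm
  · left
    refine ⟨j, ?_, fun l hl => (Function.update_of_ne hl _ _).symm⟩
    rw [Function.update_self]
    exact fun h => z2_succ_ne (x j) h.symm

lemma adj_iff {m : ℕ} (x y : Fin m → ZMod 2) :
    (hypercube m).Adj x y ↔ ∃ j, y = (Function.update x j (x j + 1) : Fin m → ZMod 2) := by
  constructor
  · show (fromRel (V := Fin m → ZMod 2) (fun x y => ∃ i, x i ≠ y i ∧ ∀ j, j ≠ i → x j = y j)).Adj x y → _
    rw [fromRel_adj]
    rintro ⟨hne, h | h⟩ <;> obtain ⟨i, hi, hoth⟩ := h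
    · refine ⟨i, funext fun l => ?_⟩
      by_cases hl : l = i
      · subst hl; rw [Function.update_self]; exact z2_eq_succ_of_ne hi
      · rw [Function.update_of_ne hl]; exact (hoth l hl).symm
    · refine ⟨i, funext fun l => ?_⟩
      by_cases hl : l = i
      · subst hl; rw [Function.update_self]; exact z2_eq_succ_of_ne (Ne.symm hi)
      · rw [Function.update_of_ne hl]; exact (hoth l hl)
  · rintro ⟨j, rfl⟩; exact adj_flip x j

/-! ### Columns of the Hamming parity-check matrix -/

lemma aux_lt (k : ℕ) (j : Fin (2 ^ k - 1)) : (j : ℕ) + 1 < 2 ^ k := by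
  have := j.isLt; omega

def bv (k : ℕ) (j : Fin (2 ^ k - 1)) : Fin k → ZMod 2 :=
  finFunctionFinEquiv.symm ⟨(j : ℕ) + 1, aux_lt k j⟩

lemma ffe_zero (k : ℕ) : (finFunctionFinEquiv (0 : Fin k → Fin 2) : ℕ) = 0 := by
  rw [finFunctionFinEquiv_apply]; simp

lemma bv_ne_zero (k : ℕ) (j : Fin (2 ^ k - 1)) : bv k j ≠ 0 := by
  intro h
  have h2 := congrArg (fun t => (finFunctionFinEquiv (t : Fin k → Fin 2) : ℕ)) h
  simp only [bv, Equiv.apply_symm_apply] at h2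
  rw [show (finFunctionFinEquiv (0 : Fin k → ZMod 2) : ℕ) = 0 from ffe_zero k] at h2
  simp at h2

lemma bv_surj {k : ℕ} {s : Fin k → ZMod 2} (hs : s ≠ 0) : ∃ j, bv k j = s := by
  have hlt : ((finFunctionFinEquiv (s : Fin k → Fin 2)) : ℕ) < 2 ^ k := Fin.isLt _
  have hne : ((finFunctionFinEquiv (s : Fin k → Fin 2)) : ℕ) ≠ 0 := by
    intro h0
    apply hs
    have h1 : finFunctionFinEquiv (s : Fin k → Fin 2) =
        finFunctionFinEquiv (0 : Fin k → Fin 2) := by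
      apply Fin.ext; rw [h0, ffe_zero]
    exact finFunctionFinEquiv.injective h1
  refine ⟨⟨(finFunctionFinEquiv (s : Fin k → Fin 2) : ℕ) - 1, by omega⟩, ?_⟩
  rw [bv]
  have h2 : (⟨((⟨(finFunctionFinEquiv (s : Fin k → Fin 2) : ℕ) - 1, by omega⟩ : Fin (2 ^ k - 1)) : ℕ) + 1,
      aux_lt k _⟩ : Fin (2 ^ k)) = finFunctionFinEquiv (s : Fin k → Fin 2) := by
    apply Fin.ext; simp only [Fin.val_mk]; omega
  rw [h2]
  exact Equiv.symm_apply_apply _ _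

/-! ### The syndrome map -/

def syn (k : ℕ) (x : Fin (2 ^ k - 1) → ZMod 2) : Fin k → ZMod 2 :=
  ∑ i, x i • bv k i

lemma syn_add (k : ℕ) (x y : Fin (2 ^ k - 1) → ZMod 2) :
    syn k (x + y) = syn k x + syn k y := by
  simp [syn, add_smul, Finset.sum_add_distrib]

lemma syn_zero (k : ℕ) : syn k 0 = 0 := by simp [syn]

lemma syn_update (k : ℕ) (x : Fin (2 ^ k - 1) → ZMod 2) (j : Fin (2 ^ k - 1)) :
    syn k (Function.update x j (x j + 1)) = syn k x + bv k j := by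
  have hdecomp : Function.update x j (x j + 1) =
      x + Function.update (0 : Fin (2 ^ k - 1) → ZMod 2) j 1 := by
    funext l
    by_cases hl : l = j
    · subst hl; simp
    · simp [Function.update_of_ne hl]
  rw [hdecomp, syn_add]
  congr 1
  rw [syn]
  rw [Finset.sum_eq_single j]
  · simp
  · intro i _ hij; rw [Function.update_of_ne hij]; simp
  · intro h; exact absurd (Finset.mem_univ j) h

def synHom (k : ℕ) : (Fin (2 ^ k - 1) → ZMod 2) →+ (Fin k → ZMod 2) :=
  AddMonoidHom.mk' (syn k) (syn_add k)

lemma syn_surj (k : ℕ) : Function.Surjective (syn k) := by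
  intro s
  by_cases hs : s = 0
  · exact ⟨0, by rw [syn_zero, hs]⟩
  · obtain ⟨j, hj⟩ := bv_surj hs
    refine ⟨Function.update (0 : Fin (2 ^ k - 1) → ZMod 2) j 1, ?_⟩
    have h1 : Function.update (0 : Fin (2 ^ k - 1) → ZMod 2) j
        ((0 : Fin (2 ^ k - 1) → ZMod 2) j + 1) = Function.update (0 : Fin (2 ^ k - 1) → ZMod 2) j 1 := by simp
    rw [← h1, syn_update, syn_zero, zero_add, hj]

/-! ### Cardinality of the code -/

lemma card_code (k : ℕ) :
    (univ.filter (fun x : Fin (2 ^ k - 1) → ZMod 2 => syn k x = 0)).card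
      = 2 ^ (2 ^ k - 1 - k) := by
  have hq : Nat.card ((Fin (2 ^ k - 1) → ZMod 2) ⧸ (synHom k).ker) = 2 ^ k := by
    rw [Nat.card_congr (QuotientAddGroup.quotientKerEquivOfSurjective (synHom k)
      (syn_surj k)).toEquiv]
    simp [Nat.card_eq_fintype_card, Fintype.card_fun]
  have htot : Nat.card (Fin (2 ^ k - 1) → ZMod 2) = 2 ^ (2 ^ k - 1) := by
    simp [Nat.card_eq_fintype_card, Fintype.card_fun]
  have h := AddSubgroup.card_eq_card_quotient_mul_card_addSubgroup (synHom k).ker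
  rw [hq, htot] at h
  have hk : k ≤ 2 ^ k - 1 := by have := Nat.lt_pow_self (n := k) (by norm_num : 1 < 2); omega
  have hker : Nat.card (synHom k).ker = 2 ^ (2 ^ k - 1 - k) := by
    have hpow : (2 : ℕ) ^ (2 ^ k - 1) = 2 ^ k * 2 ^ (2 ^ k - 1 - k) := by
      rw [← pow_add]; congr 1; omega
    rw [hpow] at h
    exact (Nat.eq_of_mul_eq_mul_left (by positivity) h.symm)
  rw [← Fintype.card_subtype, ← hker, Nat.card_eq_fintype_card]
  apply Fintype.card_congr
  exact (Equiv.subtypeEquivRight (fun x => by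
    simp [AddMonoidHom.mem_ker, synHom])).symm

/-! ### The code dominates `Q (2^k - 1)` -/

def codeF (k : ℕ) : Finset (Fin (2 ^ k - 1) → ZMod 2) :=
  univ.filter (fun x => syn k x = 0)

lemma pi_add_self {ι : Type*} (x : ι → ZMod 2) : x + x = 0 := by
  funext i; exact z2_add_self (x i)

lemma codeF_dominating (k : ℕ) :
    IsDominatingSet (hypercube (2 ^ k - 1)) ((codeF k : Set (Fin (2 ^ k - 1) → ZMod 2))) := by
  refine fun (v : Fin (2 ^ k - 1) → ZMod 2) => ?_
  by_cases hv : syn k v = 0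
  · left
    show v ∈ codeF k
    exact Finset.mem_coe.mpr (Finset.mem_filter.mpr ⟨mem_univ _, hv⟩)
  · right
    obtain ⟨j, hj⟩ := bv_surj hv
    refine ⟨(Function.update v j (v j + 1) : Fin (2 ^ k - 1) → ZMod 2), ?_, adj_flip v j⟩
    show (Function.update v j (v j + 1) : Fin (2 ^ k - 1) → ZMod 2) ∈ codeF k
    refine Finset.mem_filter.mpr ⟨mem_univ _, ?_⟩
    rw [syn_update, hj, pi_add_self]

/-! ### Lower bounds via counting -/

lemma neighbor_mem_image {m : ℕ} {d v : Fin m → ZMod 2} (h : (hypercube m).Adj d v) :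
    v ∈ (univ : Finset (Fin m)).image
      (fun j => (Function.update d j (d j + 1) : Fin m → ZMod 2)) := by
  obtain ⟨j, rfl⟩ := (adj_iff d v).mp h
  exact mem_image.mpr ⟨j, mem_univ j, rfl⟩

lemma dom_lower {m : ℕ} (D : Finset (Fin m → ZMod 2))
    (hD : IsDominatingSet (hypercube m) ((D : Set (Fin m → ZMod 2)))) : 2 ^ m ≤ D.card * (m + 1) := by
  classical
  have hsub : (univ : Finset (Fin m → ZMod 2)) ⊆ D.biUnion (fun d =>
      insert d ((univ : Finset (Fin m)).image
        (fun j => (Function.update d j (d j + 1) : Fin m → ZMod 2)))) := by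
    intro v _
    rcases hD v with hv | ⟨u, hu, hadj⟩
    · exact mem_biUnion.mpr ⟨v, Finset.mem_coe.mp hv, mem_insert_self _ _⟩
    · exact mem_biUnion.mpr ⟨u, Finset.mem_coe.mp hu,
        mem_insert_of_mem (neighbor_mem_image hadj.symm)⟩
  calc 2 ^ m = (univ : Finset (Fin m → ZMod 2)).card := by
        rw [card_univ]; simp [Fintype.card_fun]
    _ ≤ _ := Finset.card_le_card hsub
    _ ≤ ∑ d ∈ D, (insert d ((univ : Finset (Fin m)).image
          (fun j => (Function.update d j (d j + 1) : Fin m → ZMod 2)))).card :=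
        card_biUnion_le
    _ ≤ ∑ _d ∈ D, (m + 1) := by
        refine sum_le_sum fun d _ => ?_
        refine (card_insert_le _ _).trans ?_
        have h1 := Finset.card_image_le (s := (univ : Finset (Fin m)))
          (f := fun j => (Function.update d j (d j + 1) : Fin m → ZMod 2))
        simp only [card_univ, Fintype.card_fin] at h1
        omega
    _ = D.card * (m + 1) := by rw [sum_const, smul_eq_mul]

lemma total_lower {m : ℕ} (D : Finset (Fin m → ZMod 2))
    (hD : IsTotalDominatingSet (hypercube m) ((D : Set (Fin m → ZMod 2)))) : 2 ^ m ≤ D.card * m := by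
  classical
  have hsub : (univ : Finset (Fin m → ZMod 2)) ⊆ D.biUnion (fun d =>
      (univ : Finset (Fin m)).image
        (fun j => (Function.update d j (d j + 1) : Fin m → ZMod 2))) := by
    intro v _
    obtain ⟨u, hu, hadj⟩ := hD v
    exact mem_biUnion.mpr ⟨u, Finset.mem_coe.mp hu, neighbor_mem_image hadj.symm⟩
  calc 2 ^ m = (univ : Finset (Fin m → ZMod 2)).card := by
        rw [card_univ]; simp [Fintype.card_fun]
    _ ≤ _ := Finset.card_le_card hsub
    _ ≤ ∑ d ∈ D, ((univ : Finset (Fin m)).image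
          (fun j => (Function.update d j (d j + 1) : Fin m → ZMod 2))).card :=
        card_biUnion_le
    _ ≤ ∑ _d ∈ D, m := by
        refine sum_le_sum fun d _ => ?_
        have h1 := Finset.card_image_le (s := (univ : Finset (Fin m)))
          (f := fun j => (Function.update d j (d j + 1) : Fin m → ZMod 2))
        simpa using h1
    _ = D.card * m := by rw [sum_const, smul_eq_mul]

lemma pow_le_of_le_mul {a b c : ℕ} (hb : b ≤ a) (h : 2 ^ a ≤ c * 2 ^ b) :
    2 ^ (a - b) ≤ c := by
  have h2 : 2 ^ (a - b) * 2 ^ b ≤ c * 2 ^ b := by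
    rw [← pow_add, Nat.sub_add_cancel hb]; exact h
  exact Nat.le_of_mul_le_mul_right h2 (by positivity)

/-! ### Extended codes -/

def restr {n t : ℕ} (y : Fin (n + t) → ZMod 2) : Fin n → ZMod 2 :=
  fun i => y (Fin.castAdd t i)

def codeExt (k t : ℕ) : Finset (Fin ((2 ^ k - 1) + t) → ZMod 2) :=
  univ.filter (fun y => syn k (restr y) = 0)

lemma restr_update_castAdd {n t : ℕ} (y : Fin (n + t) → ZMod 2) (j : Fin n) (v : ZMod 2) :
    restr (Function.update y (Fin.castAdd t j) v) = Function.update (restr y) j v := by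
  funext i
  by_cases hi : i = j
  · subst hi; simp [restr]
  · rw [restr]
    rw [Function.update_of_ne (fun h => hi (by
      apply Fin.ext
      have := congrArg Fin.val h
      simpa using this))]
    rw [Function.update_of_ne hi, restr]

lemma restr_update_natAdd {n t : ℕ} (y : Fin (n + t) → ZMod 2) (r : Fin t) (v : ZMod 2) :
    restr (Function.update y (Fin.natAdd n r) v) = restr y := by
  funext i
  rw [restr, Function.update_of_ne (fun h => by
    have := congrArg Fin.val h
    simp at this
    omega), restr]

lemma codeExt_total_dominating (k t : ℕ) (ht : 0 < t) :
    IsTotalDominatingSet (hypercube ((2 ^ k - 1) + t))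
      ((codeExt k t : Set (Fin ((2 ^ k - 1) + t) → ZMod 2))) := by
  refine fun (y : Fin ((2 ^ k - 1) + t) → ZMod 2) => ?_
  by_cases hx : syn k (restr y) = 0
  · refine ⟨(Function.update y (Fin.natAdd _ ⟨0, ht⟩) (y _ + 1) :
        Fin ((2 ^ k - 1) + t) → ZMod 2), ?_, adj_flip y _⟩
    refine Finset.mem_coe.mpr (Finset.mem_filter.mpr ⟨mem_univ _, ?_⟩)
    rw [restr_update_natAdd]; exact hx
  · obtain ⟨j, hj⟩ := bv_surj hx
    refine ⟨(Function.update y (Fin.castAdd t j) (y _ + 1) :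
        Fin ((2 ^ k - 1) + t) → ZMod 2), ?_, adj_flip y _⟩
    refine Finset.mem_coe.mpr (Finset.mem_filter.mpr ⟨mem_univ _, ?_⟩)
    rw [restr_update_castAdd]
    have : y (Fin.castAdd t j) = restr y j := rfl
    rw [this, syn_update, hj, pi_add_self]

def splitEquiv (k t : ℕ) :
    {y : Fin ((2 ^ k - 1) + t) → ZMod 2 // syn k (restr y) = 0} ≃
      ((Fin t → ZMod 2) × {x : Fin (2 ^ k - 1) → ZMod 2 // syn k x = 0}) where
  toFun y := ((fun i => y.1 (Fin.natAdd _ i)), ⟨restr y.1, y.2⟩)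
  invFun p := ⟨Fin.append p.2.1 p.1, by
    have h : restr (Fin.append p.2.1 p.1 : Fin ((2 ^ k - 1) + t) → ZMod 2) = p.2.1 :=
      funext fun i => Fin.append_left _ _ i
    rw [h]; exact p.2.2⟩
  left_inv y := Subtype.ext (Fin.append_castAdd_natAdd (f := y.1))
  right_inv p := by
    refine Prod.ext ?_ (Subtype.ext ?_)
    · funext i; exact Fin.append_right _ _ i
    · funext i; exact Fin.append_left _ _ i

lemma codeExt_card (k t : ℕ) :
    (codeExt k t).card = 2 ^ t * 2 ^ (2 ^ k - 1 - k) := by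
  rw [codeExt, ← Fintype.card_subtype]
  rw [Fintype.card_congr (splitEquiv k t)]
  rw [Fintype.card_prod, Fintype.card_subtype, card_code, Fintype.card_fun]
  simp

end DomHyp

theorem domination_hypercube_pow_two (k : ℕ) (hk : 0 < k) :
    dominationNumber (hypercube (2 ^ k - 1)) = 2 ^ (2 ^ k - k - 1) ∧
    totalDominationNumber (hypercube (2 ^ k)) = 2 ^ (2 ^ k - k) ∧
    dominationNumber (hypercube (2 ^ k)) ≤ 2 ^ (2 ^ k - k) ∧
    totalDominationNumber (hypercube (2 ^ k + 1)) ≤ 2 ^ (2 ^ k - k + 1) := by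
  have hk2 : k < 2 ^ k := Nat.lt_pow_self (n := k) (by norm_num : 1 < 2)
  -- Part 1
  have hset1 : (2 : ℕ) ^ (2 ^ k - 1 - k) ∈
      {n | ∃ D : Finset (Fin (2 ^ k - 1) → Fin 2), D.card = n ∧
        IsDominatingSet (hypercube (2 ^ k - 1)) ↑D} :=
    ⟨DomHyp.codeF k, DomHyp.card_code k, DomHyp.codeF_dominating k⟩
  have p1 : dominationNumber (hypercube (2 ^ k - 1)) = 2 ^ (2 ^ k - k - 1) := by
    rw [show 2 ^ k - k - 1 = 2 ^ k - 1 - k from by omega]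
    unfold dominationNumber
    refine le_antisymm (Nat.sInf_le hset1) (le_csInf ⟨_, hset1⟩ ?_)
    rintro m ⟨D, rfl, hdom⟩
    have hle := DomHyp.dom_lower D hdom
    rw [show (2 ^ k - 1) + 1 = 2 ^ k from by omega] at hle
    exact DomHyp.pow_le_of_le_mul (by omega) hle
  -- Part 2
  have hset2 : (2 : ℕ) ^ (2 ^ k - k) ∈
      {n | ∃ D : Finset (Fin ((2 ^ k - 1) + 1) → Fin 2), D.card = n ∧
        IsTotalDominatingSet (hypercube ((2 ^ k - 1) + 1)) ↑D} := by
    refine ⟨DomHyp.codeExt k 1, ?_, DomHyp.codeExt_total_dominating k 1 one_pos⟩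
    refine (DomHyp.codeExt_card k 1).trans ?_
    rw [← pow_add]
    congr 1
    omega
  have p2' : totalDominationNumber (hypercube ((2 ^ k - 1) + 1)) = 2 ^ (2 ^ k - k) := by
    unfold totalDominationNumber
    refine le_antisymm (Nat.sInf_le hset2) (le_csInf ⟨_, hset2⟩ ?_)
    rintro m ⟨D, rfl, hdom⟩
    have e : 2 ^ k - 1 + 1 = 2 ^ k := by omega
    have hle2 : 2 ^ (2 ^ k) ≤ D.card * 2 ^ k := by
      calc 2 ^ (2 ^ k) = 2 ^ (2 ^ k - 1 + 1) := by rw [e]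
        _ ≤ D.card * (2 ^ k - 1 + 1) := DomHyp.total_lower D hdom
        _ = D.card * 2 ^ k := congrArg (fun t => D.card * t) e
    exact DomHyp.pow_le_of_le_mul (by omega) hle2
  have p2 : totalDominationNumber (hypercube (2 ^ k)) = 2 ^ (2 ^ k - k) := by
    rwa [show 2 ^ k - 1 + 1 = 2 ^ k from by omega] at p2'
  -- Part 3
  have p3' : dominationNumber (hypercube ((2 ^ k - 1) + 1)) ≤ 2 ^ (2 ^ k - k) := by
    unfold dominationNumber
    refine Nat.sInf_le ?_
    obtain ⟨D, hcard, hdom⟩ := hset2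
    exact ⟨D, hcard, fun v => Or.inr (hdom v)⟩
  have p3 : dominationNumber (hypercube (2 ^ k)) ≤ 2 ^ (2 ^ k - k) := by
    rwa [show 2 ^ k - 1 + 1 = 2 ^ k from by omega] at p3'
  -- Part 4
  have hset4 : (2 : ℕ) ^ (2 ^ k - k + 1) ∈
      {n | ∃ D : Finset (Fin ((2 ^ k - 1) + 2) → Fin 2), D.card = n ∧
        IsTotalDominatingSet (hypercube ((2 ^ k - 1) + 2)) ↑D} := by
    refine ⟨DomHyp.codeExt k 2, ?_, DomHyp.codeExt_total_dominating k 2 two_pos⟩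
    refine (DomHyp.codeExt_card k 2).trans ?_
    rw [← pow_add]
    congr 1
    omega
  have p4' : totalDominationNumber (hypercube ((2 ^ k - 1) + 2)) ≤ 2 ^ (2 ^ k - k + 1) := by
    unfold totalDominationNumber
    exact Nat.sInf_le hset4
  have p4 : totalDominationNumber (hypercube (2 ^ k + 1)) ≤ 2 ^ (2 ^ k - k + 1) := by
    rwa [show 2 ^ k - 1 + 2 = 2 ^ k + 1 from by omega] at p4'
  exact ⟨p1, p2, p3, p4⟩
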